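/- Let R be the root system of type A_n (n ≥ 1) and λ = -ω_n the negative of the last fundamental weight. Then Prim(σ_λ) = W_λ·(-ω_1), this set consists of the n vectors -ε_k + (1/(n+1))Σ_{i=1}^{n+1} ε_i for k = 1,...,n, and it is a basis of the weight lattice Λ_P. Moreover the affine span of Prim(σ_λ) equals -ω_1 + ℝ⟨α_1,...,α_{n-1}⟩. -/

import Mathlib

open scoped RealInnerProductSpace

namespace AnType

/-- The (orthogonal) reflection in the hyperplane orthogonal to `a`. -/
noncomputable def reflAt {V : Type*} [NormedAddCommGroup V] [InnerProductSpace ℝ V]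
    (a : V) : V → V :=
  fun v => v - (2 * ⟪v, a⟫ / ⟪a, a⟫) • a

/-- `F` is a face of the convex cone `σ`. -/
def IsFace {V : Type*} [NormedAddCommGroup V] [InnerProductSpace ℝ V]
    (σ F : Set V) : Prop :=
  F ⊆ σ ∧ Convex ℝ F ∧ ∀ x ∈ σ, ∀ y ∈ σ, x + y ∈ F → x ∈ F ∧ y ∈ F

/-- The ray generated by `v`. -/
def rayOf {V : Type*} [NormedAddCommGroup V] [InnerProductSpace ℝ V] (v : V) : Set V :=
  {x | ∃ c : ℝ, 0 ≤ c ∧ x = c • v}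

/-- The set of primitive lattice generators of the rays (one-dimensional faces) of the
cone `σ`, relative to the lattice `Λ`. -/
def Prim {V : Type*} [NormedAddCommGroup V] [InnerProductSpace ℝ V]
    (Λ : AddSubgroup V) (σ : Set V) : Set V :=
  {v | v ∈ Λ ∧ v ≠ 0 ∧ IsFace σ (rayOf v) ∧
    ∀ u ∈ Λ, u ∈ rayOf v → ∃ k : ℕ, u = k • v}

variable (n : ℕ)

/-- The standard basis vector `ε_i` of `ℝ^{n+1}`. -/
noncomputable def e (i : Fin (n + 1)) : EuclideanSpace ℝ (Fin (n + 1)) :=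
  EuclideanSpace.single i 1

/-- The simple roots `α_i = ε_i - ε_{i+1}` of `A_n` (Bourbaki conventions,
0-indexed). -/
noncomputable def simpleRoot (i : Fin n) : EuclideanSpace ℝ (Fin (n + 1)) :=
  e n i.castSucc - e n i.succ

/-- The vector `Σ_{i=1}^{n+1} ε_i`. -/
noncomputable def allOnes : EuclideanSpace ℝ (Fin (n + 1)) := ∑ i, e n i

/-- The fundamental weights `ω_i = ε_1 + ⋯ + ε_i - (i/(n+1)) Σ ε_j` of `A_n`
(Bourbaki conventions, 0-indexed: `fw i = ω_{i+1}`). -/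
noncomputable def fw (i : Fin n) : EuclideanSpace ℝ (Fin (n + 1)) :=
  (∑ k ∈ Finset.univ.filter fun k : Fin (n + 1) => (k : ℕ) ≤ (i : ℕ), e n k) -
    (((i : ℕ) + 1 : ℝ) / ((n : ℝ) + 1)) • allOnes n

/-- The anti-dominant Weyl chamber of `A_n`, inside the hyperplane orthogonal to
`Σ ε_i`. -/
noncomputable def antiDomChamber : Set (EuclideanSpace ℝ (Fin (n + 1))) :=
  {v | ⟪v, allOnes n⟫ = 0 ∧ ∀ j : Fin n, ⟪v, simpleRoot n j⟫ ≤ 0}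

/-- The Weyl group of `A_n` (the symmetric group `S_{n+1}`), generated by the simple
reflections. -/
noncomputable def Weyl :
    Subgroup ((EuclideanSpace ℝ (Fin (n + 1))) ≃ₗ[ℝ] (EuclideanSpace ℝ (Fin (n + 1)))) :=
  Subgroup.closure {g | ∃ i : Fin n, ∀ v, g v = reflAt (simpleRoot n i) v}

/-- `σ_λ = ⋃_{w ∈ W_λ} w·C`. -/
noncomputable def sigmaCone (l : EuclideanSpace ℝ (Fin (n + 1))) :
    Set (EuclideanSpace ℝ (Fin (n + 1))) :=
  ⋃ w ∈ {w | w ∈ Weyl n ∧ w l = l}, ⇑w '' antiDomChamber n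

/-- The weight lattice `Λ_P` of `A_n`: the `ℤ`-span of the fundamental weights. -/
noncomputable def weightLattice : AddSubgroup (EuclideanSpace ℝ (Fin (n + 1))) :=
  AddSubgroup.closure (Set.range (fw n))

end AnType

theorem Equiv.Perm.apply_inv_self {α : Type*} (f : Equiv.Perm α) (x : α) : f (f⁻¹ x) = x :=
  f.apply_symm_apply x

theorem Equiv.Perm.inv_apply_self {α : Type*} (f : Equiv.Perm α) (x : α) : f⁻¹ (f x) = x :=
  f.symm_apply_apply x

namespace AnType

variable (n : ℕ)

lemma e_apply (i j : Fin (n+1)) : e n i j = if j = i then 1 else 0 := by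
  simp [e, EuclideanSpace.single_apply]

lemma allOnes_apply (j : Fin (n+1)) : allOnes n j = 1 := by
  simp only [allOnes]
  rw [show (∑ i, e n i) j = ∑ i, e n i j from by rw [WithLp.ofLp_sum]; exact Finset.sum_apply j _ _]
  simp [e_apply]

lemma inner_eq (x y : EuclideanSpace ℝ (Fin (n+1))) : ⟪x,y⟫ = ∑ i, x i * y i := by
  rw [PiLp.inner_apply]; simp [RCLike.inner_apply]; exact Finset.sum_congr rfl fun i _ => mul_comm _ _

lemma inner_allOnes (x : EuclideanSpace ℝ (Fin (n+1))) : ⟪x, allOnes n⟫ = ∑ i, x i := by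
  simp [inner_eq, allOnes_apply]

lemma inner_simpleRoot (x : EuclideanSpace ℝ (Fin (n+1))) (j : Fin n) :
    ⟪x, simpleRoot n j⟫ = x j.castSucc - x j.succ := by
  have hne : j.castSucc ≠ j.succ := (Fin.castSucc_lt_succ (i := j)).ne
  simp only [inner_eq, simpleRoot]
  have : ∀ i : Fin (n+1), x i * (e n j.castSucc - e n j.succ) i
      = x i * ((if i = j.castSucc then 1 else 0) - (if i = j.succ then 1 else 0)) := by
    intro i; congr 1
    simp [PiLp.sub_apply, e_apply]
  rw [Finset.sum_congr rfl fun i _ => this i]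
  simp only [mul_sub, Finset.sum_sub_distrib, mul_ite, mul_one, mul_zero]
  rw [Finset.sum_ite_eq' Finset.univ j.castSucc, Finset.sum_ite_eq' Finset.univ j.succ]
  simp

lemma fw_apply (i : Fin n) (j : Fin (n+1)) :
    fw n i j = (if (j:ℕ) ≤ (i:ℕ) then 1 else 0) - ((i:ℕ)+1)/((n:ℝ)+1) := by
  simp only [fw, PiLp.sub_apply, PiLp.smul_apply, allOnes_apply, smul_eq_mul, mul_one]
  congr 1
  rw [show (∑ k ∈ Finset.univ.filter fun k : Fin (n + 1) => (k : ℕ) ≤ (i : ℕ), e n k) j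
      = ∑ k ∈ Finset.univ.filter fun k : Fin (n + 1) => (k : ℕ) ≤ (i : ℕ), e n k j from
      by rw [WithLp.ofLp_sum]; exact Finset.sum_apply j _ _]
  simp only [e_apply]
  rw [Finset.sum_ite_eq]
  simp

/-- The candidate primitive generators. -/
noncomputable def u (k : Fin n) : EuclideanSpace ℝ (Fin (n + 1)) :=
  -(e n k.castSucc) + (((n : ℝ) + 1)⁻¹) • allOnes n

lemma u_apply (k : Fin n) (j : Fin (n+1)) :
    u n k j = (if j = k.castSucc then -1 else 0) + ((n:ℝ)+1)⁻¹ := by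
  simp only [u, PiLp.add_apply, PiLp.neg_apply, PiLp.smul_apply, allOnes_apply, e_apply,
    smul_eq_mul, mul_one]
  split <;> simp

lemma sum_smul_u_apply (c : Fin n → ℝ) (j : Fin (n+1)) :
    (∑ k, c k • u n k) j
      = (if h : (j:ℕ) < n then -(c ⟨j, h⟩) else 0) + (∑ k, c k) * ((n:ℝ)+1)⁻¹ := by
  rw [show (∑ k, c k • u n k) j = ∑ k, c k * u n k j by
    rw [WithLp.ofLp_sum, Finset.sum_apply j _ _]; rfl]
  simp only [u_apply, mul_add, Finset.sum_add_distrib, ← Finset.sum_mul]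
  congr 1
  simp only [mul_ite, mul_neg_one, mul_zero]
  by_cases h : (j:ℕ) < n
  · rw [dif_pos h]
    have : ∀ k : Fin n, (if j = k.castSucc then -(c k) else 0)
        = (if k = ⟨j, h⟩ then -(c k) else 0) := by
      intro k
      by_cases hk : k = ⟨j, h⟩
      · subst hk
        have hjj : j = Fin.castSucc (⟨↑j, h⟩ : Fin n) := by apply Fin.ext; simp
        rw [if_pos hjj, if_pos rfl]
      · rw [if_neg, if_neg hk]
        intro hh
        apply hk
        apply Fin.ext
        simp only [Fin.val_mk]
        have hv := congrArg Fin.val hh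
        simp only [Fin.coe_castSucc] at hv
        omega
    rw [Finset.sum_congr rfl fun k _ => this k, Finset.sum_ite_eq' Finset.univ]
    simp
  · rw [dif_neg h]
    apply Finset.sum_eq_zero
    intro k _
    rw [if_neg]
    intro hh
    exact h (by rw [hh]; simpa using k.isLt)

lemma sum_u_coords (k : Fin n) : ∑ j, u n k j = 0 := by
  simp only [u_apply, Finset.sum_add_distrib]
  rw [Finset.sum_ite_eq' Finset.univ]
  simp
  field_simp
  norm_num

lemma decomp (v : EuclideanSpace ℝ (Fin (n+1))) (hv : ∑ i, v i = 0) :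
    v = ∑ k : Fin n, (v (Fin.last n) - v k.castSucc) • u n k := by
  have hsum : ∑ k : Fin n, (v (Fin.last n) - v k.castSucc) = ((n:ℝ)+1) * v (Fin.last n) := by
    rw [Finset.sum_sub_distrib]
    have h2 : ∑ k : Fin n, v k.castSucc = - v (Fin.last n) := by
      have := Fin.sum_univ_castSucc (f := v)
      rw [this] at hv; linarith
    rw [h2]; simp; ring
  ext j
  rw [sum_smul_u_apply]
  rw [hsum]
  have hn1 : ((n:ℝ)+1) ≠ 0 := by positivity
  by_cases h : (j:ℕ) < n
  · rw [dif_pos h]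
    have hc : Fin.castSucc (⟨j, h⟩ : Fin n) = j := Fin.ext rfl
    rw [hc]
    field_simp
    ring
  · rw [dif_neg h]
    have hj : j = Fin.last n := Fin.ext (by simp only [Fin.val_last]; have := j.isLt; omega)
    rw [hj]
    field_simp
    ring

lemma u_linearIndependent : LinearIndependent ℝ (u n) := by
  rw [Fintype.linearIndependent_iff]
  intro g hg k
  have happ : ∀ j, (∑ k, g k • u n k) j = 0 := by
    intro j; rw [hg]; rfl
  have hlast := happ (Fin.last n)
  rw [sum_smul_u_apply] at hlast
  rw [dif_neg (by simp)] at hlast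
  have hn1 : ((n:ℝ)+1) ≠ 0 := by positivity
  have hsum : ∑ k, g k = 0 := by
    rw [zero_add, mul_eq_zero] at hlast
    rcases hlast with h | h
    · exact h
    · exact absurd h (inv_ne_zero hn1)
  have hk := happ k.castSucc
  rw [sum_smul_u_apply] at hk
  rw [dif_pos (by simpa using k.isLt)] at hk
  rw [hsum] at hk
  have : (⟨(k.castSucc : ℕ), by simpa using k.isLt⟩ : Fin n) = k := Fin.ext (by simp)
  rw [this] at hk
  linarith [hk]

/-- The linear equivalence permuting coordinates: `(permLE π v) i = v (π⁻¹ i)`. -/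
noncomputable def permLE (π : Equiv.Perm (Fin (n+1))) :
    EuclideanSpace ℝ (Fin (n + 1)) ≃ₗ[ℝ] EuclideanSpace ℝ (Fin (n + 1)) where
  toFun v := WithLp.toLp 2 (fun i => v (π⁻¹ i))
  invFun v := WithLp.toLp 2 (fun i => v (π i))
  map_add' _ _ := rfl
  map_smul' _ _ := rfl
  left_inv v := by ext i; show v (π⁻¹ (π i)) = v i; rw [Equiv.Perm.inv_apply_self]
  right_inv v := by ext i; show v (π (π⁻¹ i)) = v i; rw [Equiv.Perm.apply_inv_self]

lemma permLE_apply (π : Equiv.Perm (Fin (n+1))) (v : EuclideanSpace ℝ (Fin (n+1)))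
    (i : Fin (n+1)) : permLE n π v i = v (π⁻¹ i) := rfl

lemma permLE_mul (π τ : Equiv.Perm (Fin (n+1))) :
    permLE n (τ * π) = permLE n τ * permLE n π := by
  apply LinearEquiv.toLinearMap_injective
  apply LinearMap.ext
  intro v
  ext i
  show v ((τ * π)⁻¹ i) = v (π⁻¹ (τ⁻¹ i))
  rw [mul_inv_rev]
  rfl

lemma reflAt_simpleRoot_apply (i : Fin n) (v : EuclideanSpace ℝ (Fin (n+1))) (j : Fin (n+1)) :
    reflAt (simpleRoot n i) v j = v (Equiv.swap i.castSucc i.succ j) := by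
  have hne : i.castSucc ≠ i.succ := (Fin.castSucc_lt_succ (i := i)).ne
  have hself : ⟪simpleRoot n i, simpleRoot n i⟫ = 2 := by
    rw [inner_simpleRoot]
    simp only [simpleRoot, PiLp.sub_apply, e_apply]
    rw [if_neg hne, if_neg (Ne.symm hne)]
    norm_num
  have hv : ⟪v, simpleRoot n i⟫ = v i.castSucc - v i.succ := inner_simpleRoot n v i
  have hs : ∀ j, simpleRoot n i j
      = (if j = i.castSucc then 1 else 0) - (if j = i.succ then 1 else 0) := by
    intro j; simp [simpleRoot, PiLp.sub_apply, e_apply]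
  have hrefl : reflAt (simpleRoot n i) v j
      = v j - (v i.castSucc - v i.succ) * simpleRoot n i j := by
    simp only [reflAt, hself, hv, PiLp.sub_apply, PiLp.smul_apply, smul_eq_mul]
    ring
  rw [hrefl, hs j]
  rcases eq_or_ne j i.castSucc with h1 | h1
  · subst h1
    rw [Equiv.swap_apply_left, if_pos rfl, if_neg hne]
    ring
  · rcases eq_or_ne j i.succ with h2 | h2
    · subst h2
      rw [Equiv.swap_apply_right, if_neg (Ne.symm hne), if_pos rfl]
      ring
    · rw [Equiv.swap_apply_of_ne_of_ne h1 h2, if_neg h1, if_neg h2]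
      ring

lemma permLE_swap_eq (i : Fin n) (v : EuclideanSpace ℝ (Fin (n+1))) :
    permLE n (Equiv.swap i.castSucc i.succ) v = reflAt (simpleRoot n i) v := by
  ext j
  rw [permLE_apply, reflAt_simpleRoot_apply]
  rw [Equiv.swap_inv]

lemma permLE_mem_weyl (π : Equiv.Perm (Fin (n+1))) : permLE n π ∈ Weyl n := by
  have htop : π ∈ Submonoid.closure
      (Set.range fun i : Fin n ↦ Equiv.swap i.castSucc i.succ) := by
    rw [Equiv.Perm.mclosure_swap_castSucc_succ]
    trivial
  induction htop using Submonoid.closure_induction with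
  | mem x hx =>
    obtain ⟨i, rfl⟩ := hx
    apply Subgroup.subset_closure
    exact ⟨i, fun v => permLE_swap_eq n i v⟩
  | one =>
    have h1 : permLE n (1 : Equiv.Perm (Fin (n+1))) = 1 := by
      apply LinearEquiv.toLinearMap_injective
      apply LinearMap.ext
      intro v; ext j; rfl
    rw [h1]; exact Subgroup.one_mem _
  | mul x y _ _ hx hy =>
    rw [permLE_mul]
    exact Subgroup.mul_mem _ hx hy

lemma weyl_is_perm (w : EuclideanSpace ℝ (Fin (n+1)) ≃ₗ[ℝ] EuclideanSpace ℝ (Fin (n+1)))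
    (hw : w ∈ Weyl n) : ∃ π : Equiv.Perm (Fin (n+1)), ∀ v i, w v i = v (π i) := by
  induction hw using Subgroup.closure_induction with
  | mem g hg =>
    obtain ⟨i, hi⟩ := hg
    exact ⟨Equiv.swap i.castSucc i.succ, fun v j => by
      rw [hi v, reflAt_simpleRoot_apply]⟩
  | one => exact ⟨1, fun v i => rfl⟩
  | mul x y _ _ hx hy =>
    obtain ⟨π, hπ⟩ := hx
    obtain ⟨π', hπ'⟩ := hy
    refine ⟨π' * π, fun v i => ?_⟩
    show x (y v) i = _
    rw [hπ (y v) i, hπ' v (π i)]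
    rfl
  | inv x _ hx =>
    obtain ⟨π, hπ⟩ := hx
    refine ⟨π⁻¹, fun v i => ?_⟩
    have h1 := hπ (x⁻¹ v) (π⁻¹ i)
    rw [Equiv.Perm.apply_inv_self] at h1
    have h2 : x (x⁻¹ v) = v := by
      show (x * x⁻¹) v = v
      rw [mul_inv_cancel]
      rfl
    rw [h2] at h1
    exact h1.symm

/-- Coordinates of `λ = -ω_n`. -/
lemma lam_apply (hn : 1 ≤ n) (j : Fin (n+1)) :
    (-(fw n ⟨n - 1, Nat.sub_lt hn Nat.one_pos⟩)) j
      = (if j = Fin.last n then (n:ℝ) else -1) / ((n:ℝ)+1) := by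
  have hval : ((⟨n - 1, Nat.sub_lt hn Nat.one_pos⟩ : Fin n) : ℕ) = n - 1 := rfl
  have h1 : ((n:ℝ) - 1) + 1 = (n:ℝ) := by ring
  have hcast : ((n - 1 : ℕ) : ℝ) = (n:ℝ) - 1 := by
    have : (n - 1) + 1 = n := by omega
    have := congrArg (fun m : ℕ => (m : ℝ)) this
    push_cast at this
    linarith
  show -(fw n ⟨n - 1, Nat.sub_lt hn Nat.one_pos⟩ j) = _
  rw [fw_apply, hval, hcast, h1]
  have hn1 : ((n:ℝ)+1) ≠ 0 := by positivity
  by_cases hj : j = Fin.last n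
  · subst hj
    rw [if_neg (by simp; omega), if_pos rfl]
    field_simp
    ring
  · have hjn : (j:ℕ) < n := by
      have := j.isLt
      rcases Nat.lt_or_ge (j:ℕ) n with h | h
      · exact h
      · exact absurd (Fin.ext (by simp only [Fin.val_last]; omega)) hj
    rw [if_pos (by omega), if_neg hj]
    field_simp
    ring

lemma lam_last_ne (hn : 1 ≤ n) (j : Fin (n+1)) (hj : j ≠ Fin.last n) :
    (-(fw n ⟨n - 1, Nat.sub_lt hn Nat.one_pos⟩)) j ≠ (-(fw n ⟨n - 1, Nat.sub_lt hn Nat.one_pos⟩)) (Fin.last n) := by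
  rw [lam_apply n hn, lam_apply n hn, if_neg hj, if_pos rfl]
  have hn1 : (0:ℝ) < (n:ℝ)+1 := by positivity
  intro h
  rw [div_eq_div_iff (by positivity) (by positivity)] at h
  have hnn : (1:ℝ) ≤ (n:ℝ) := by exact_mod_cast hn
  nlinarith

/-- Members of the Weyl group fixing `λ` are permutations fixing the last coordinate. -/
lemma stab_perm (hn : 1 ≤ n)
    (w : EuclideanSpace ℝ (Fin (n+1)) ≃ₗ[ℝ] EuclideanSpace ℝ (Fin (n+1)))
    (hw : w ∈ Weyl n) (hl : w (-(fw n ⟨n - 1, Nat.sub_lt hn Nat.one_pos⟩)) = -(fw n ⟨n - 1, Nat.sub_lt hn Nat.one_pos⟩)) :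
    ∃ π : Equiv.Perm (Fin (n+1)), (∀ v i, w v i = v (π i)) ∧ π (Fin.last n) = Fin.last n := by
  obtain ⟨π, hπ⟩ := weyl_is_perm n w hw
  refine ⟨π, hπ, ?_⟩
  by_contra hne
  have h1 := hπ (-(fw n ⟨n - 1, Nat.sub_lt hn Nat.one_pos⟩)) (Fin.last n)
  rw [hl] at h1
  exact lam_last_ne n hn (π (Fin.last n)) hne h1.symm

/-- `permLE π` fixes `λ` when `π` fixes the last coordinate. -/
lemma permLE_fixes_lam (hn : 1 ≤ n) (π : Equiv.Perm (Fin (n+1)))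
    (hπ : π (Fin.last n) = Fin.last n) :
    permLE n π (-(fw n ⟨n - 1, Nat.sub_lt hn Nat.one_pos⟩)) = -(fw n ⟨n - 1, Nat.sub_lt hn Nat.one_pos⟩) := by
  have hπ' : π⁻¹ (Fin.last n) = Fin.last n := by
    have h := congrArg (fun x => π⁻¹ x) hπ
    simp only [Equiv.Perm.inv_apply_self] at h
    exact h.symm
  ext j
  rw [permLE_apply, lam_apply n hn, lam_apply n hn]
  congr 1
  by_cases hj : j = Fin.last n
  · subst hj; rw [hπ']
  · rw [if_neg hj, if_neg]
    intro h
    exact hj (by rw [← hπ, ← h, Equiv.Perm.apply_inv_self])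

/-- The explicit description of `σ_λ`. -/
noncomputable def sigma' : Set (EuclideanSpace ℝ (Fin (n+1))) :=
  {v | (∑ i, v i) = 0 ∧ ∀ i, v i ≤ v (Fin.last n)}

lemma sigmaCone_subset (hn : 1 ≤ n) :
    sigmaCone n (-(fw n ⟨n - 1, Nat.sub_lt hn Nat.one_pos⟩)) ⊆ sigma' n := by
  intro v hv
  simp only [sigmaCone, Set.mem_iUnion] at hv
  obtain ⟨w, ⟨hwW, hwl⟩, c, hc, hveq⟩ := hv
  obtain ⟨π, hπ, hπl⟩ := stab_perm n hn w hwW hwl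
  obtain ⟨hc0, hcm⟩ := hc
  rw [inner_allOnes] at hc0
  have hvi : ∀ i, v i = c (π i) := by
    intro i
    rw [← hveq]
    exact hπ c i
  have hmono : Monotone c := by
    rw [Fin.monotone_iff_le_succ]
    intro i
    have := hcm i
    rw [inner_simpleRoot] at this
    linarith
  constructor
  · rw [show ∑ i, v i = ∑ i, c (π i) from Finset.sum_congr rfl fun i _ => hvi i]
    rw [← Equiv.sum_comp π c] at hc0
    exact hc0
  · intro i
    rw [hvi i, hvi (Fin.last n), hπl]
    exact hmono (Fin.le_last (π i))

lemma subset_sigmaCone (hn : 1 ≤ n) :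
    sigma' n ⊆ sigmaCone n (-(fw n ⟨n - 1, Nat.sub_lt hn Nat.one_pos⟩)) := by
  intro v hv
  obtain ⟨hv0, hvm⟩ := hv
  set g : Fin n → ℝ := fun k => v k.castSucc with hg
  set s : Equiv.Perm (Fin n) := Tuple.sort g with hs
  set π : Equiv.Perm (Fin (n+1)) :=
    Equiv.permCongr finSuccEquivLast.symm (Equiv.optionCongr s) with hπdef
  have hπlast : π (Fin.last n) = Fin.last n := by
    simp [hπdef, Equiv.permCongr_apply, finSuccEquivLast_last]
  have hπcast : ∀ k : Fin n, π k.castSucc = (s k).castSucc := by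
    intro k
    simp [hπdef, Equiv.permCongr_apply, finSuccEquivLast_castSucc, finSuccEquivLast_symm_some]
  simp only [sigmaCone, Set.mem_iUnion]
  refine ⟨permLE n π, ⟨permLE_mem_weyl n π, permLE_fixes_lam n hn π hπlast⟩,
    WithLp.toLp 2 (fun i => v (π i)), ⟨?_, ?_⟩, ?_⟩
  · rw [inner_allOnes]
    rw [← Equiv.sum_comp π v] at hv0
    exact hv0
  · intro j
    rw [inner_simpleRoot]
    show v (π j.castSucc) - v (π j.succ) ≤ 0
    rw [hπcast j]
    by_cases hj : (j:ℕ) + 1 < n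
    · have hsucc : j.succ = Fin.castSucc (⟨(j:ℕ)+1, hj⟩ : Fin n) := Fin.ext rfl
      rw [hsucc, hπcast]
      have := Tuple.monotone_sort g (show j ≤ (⟨(j:ℕ)+1, hj⟩ : Fin n) by
        rw [Fin.le_def]; simp)
      simp only [Function.comp_apply] at this
      have hgg : g (s j) ≤ g (s ⟨(j:ℕ)+1, hj⟩) := this
      simpa [hg] using hgg
    · have hsucc : j.succ = Fin.last n := Fin.ext (by
        simp only [Fin.val_succ, Fin.val_last]
        have := j.isLt; omega)
      rw [hsucc, hπlast]
      have := hvm ((s j).castSucc)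
      linarith
  · ext i
    show v (π (π⁻¹ i)) = v i
    rw [Equiv.Perm.apply_inv_self]

lemma u_zero_eq (h : 0 < n) : u n ⟨0, h⟩ = -(fw n ⟨0, h⟩) := by
  ext j
  rw [u_apply]
  show _ = -(fw n ⟨0, h⟩ j)
  rw [fw_apply]
  have : ((j:ℕ) ≤ ((⟨0,h⟩ : Fin n):ℕ)) ↔ (j = Fin.castSucc ⟨0,h⟩) := by
    constructor
    · intro hh; apply Fin.ext; simpa using Nat.le_zero.mp hh
    · intro hh; subst hh; simp
  by_cases hj : j = Fin.castSucc ⟨0,h⟩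
  · rw [if_pos hj, if_pos (this.mpr hj)]
    show (-1 : ℝ) + ((n:ℝ)+1)⁻¹ = -((1:ℝ) - (((⟨0,h⟩:Fin n):ℕ)+1)/((n:ℝ)+1))
    have h0 : (((⟨0,h⟩:Fin n):ℕ) : ℝ) = 0 := by norm_num
    rw [h0]
    have hn1 : ((n:ℝ)+1) ≠ 0 := by positivity
    field_simp
    ring
  · rw [if_neg hj, if_neg (fun hh => hj (this.mp hh))]
    show (0 : ℝ) + ((n:ℝ)+1)⁻¹ = -((0:ℝ) - (((⟨0,h⟩:Fin n):ℕ)+1)/((n:ℝ)+1))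
    have h0 : (((⟨0,h⟩:Fin n):ℕ) : ℝ) = 0 := by norm_num
    rw [h0]
    have hn1 : ((n:ℝ)+1) ≠ 0 := by positivity
    field_simp
    ring

lemma u_succ_eq (m : ℕ) (h : m + 1 < n) :
    u n ⟨m+1, h⟩ = fw n ⟨m, by omega⟩ - fw n ⟨m+1, h⟩ := by
  ext j
  rw [u_apply]
  show _ = fw n ⟨m, by omega⟩ j - fw n ⟨m+1, h⟩ j
  rw [fw_apply, fw_apply]
  have hval1 : ((⟨m, by omega⟩ : Fin n) : ℕ) = m := rfl
  have hval2 : ((⟨m+1, h⟩ : Fin n) : ℕ) = m + 1 := rfl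
  rw [hval1, hval2]
  have hiff : (j = Fin.castSucc ⟨m+1, h⟩) ↔ ((j:ℕ) = m + 1) := by
    constructor
    · intro hh; subst hh; simp
    · intro hh; apply Fin.ext; simpa using hh
  push_cast
  by_cases hj : (j:ℕ) = m + 1
  · rw [if_pos (hiff.mpr hj), if_neg (by omega), if_pos (by omega)]
    ring
  · rw [if_neg (fun hh => hj (hiff.mp hh))]
    by_cases hj2 : (j:ℕ) ≤ m
    · rw [if_pos hj2, if_pos (by omega)]
      ring
    · rw [if_neg hj2, if_neg (by omega)]
      ring

lemma u_mem_lattice (k : Fin n) : u n k ∈ weightLattice n := by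
  have hfw : ∀ i : Fin n, fw n i ∈ weightLattice n := fun i =>
    AddSubgroup.subset_closure ⟨i, rfl⟩
  have hkn := k.isLt
  rcases Nat.eq_zero_or_pos (k : ℕ) with h0 | h0
  · have hk : k = ⟨0, k.pos⟩ := Fin.ext (by simpa using h0)
    rw [hk, u_zero_eq n k.pos]
    exact AddSubgroup.neg_mem _ (hfw _)
  · obtain ⟨m, hm⟩ : ∃ m, (k:ℕ) = m + 1 := ⟨(k:ℕ)-1, by omega⟩
    have hmn : m + 1 < n := by omega
    have hk : k = ⟨m+1, hmn⟩ := Fin.ext (by simpa using hm)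
    rw [hk, u_succ_eq n m hmn]
    exact AddSubgroup.sub_mem _ (hfw _) (hfw _)

lemma fw_mem_closure_u : ∀ (m : ℕ) (h : m < n),
    fw n ⟨m, h⟩ ∈ AddSubgroup.closure (Set.range (u n)) := by
  intro m
  induction m with
  | zero =>
    intro h
    have : fw n ⟨0, h⟩ = -(u n ⟨0, h⟩) := by rw [u_zero_eq n h]; simp
    rw [this]
    exact AddSubgroup.neg_mem _ (AddSubgroup.subset_closure ⟨_, rfl⟩)
  | succ m ih =>
    intro h
    have : fw n ⟨m+1, h⟩ = fw n ⟨m, by omega⟩ - u n ⟨m+1, h⟩ := by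
      rw [u_succ_eq n m h]; abel
    rw [this]
    exact AddSubgroup.sub_mem _ (ih (by omega)) (AddSubgroup.subset_closure ⟨_, rfl⟩)

lemma closure_u_eq : AddSubgroup.closure (Set.range (u n)) = weightLattice n := by
  apply le_antisymm
  · rw [AddSubgroup.closure_le]
    rintro x ⟨k, rfl⟩
    exact u_mem_lattice n k
  · rw [weightLattice, AddSubgroup.closure_le]
    rintro x ⟨i, rfl⟩
    have : i = ⟨(i:ℕ), i.isLt⟩ := Fin.ext rfl
    rw [this]
    exact fw_mem_closure_u n (i:ℕ) i.isLt

lemma lattice_diff (v : EuclideanSpace ℝ (Fin (n+1))) (hv : v ∈ weightLattice n)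
    (i j : Fin (n+1)) : ∃ m : ℤ, v i - v j = m := by
  induction hv using AddSubgroup.closure_induction with
  | mem x hx =>
    obtain ⟨a, rfl⟩ := hx
    rw [fw_apply, fw_apply]
    by_cases h1 : (i:ℕ) ≤ (a:ℕ) <;> by_cases h2 : (j:ℕ) ≤ (a:ℕ)
    · exact ⟨0, by rw [if_pos h1, if_pos h2]; push_cast; ring⟩
    · exact ⟨1, by rw [if_pos h1, if_neg h2]; push_cast; ring⟩
    · exact ⟨-1, by rw [if_neg h1, if_pos h2]; push_cast; ring⟩
    · exact ⟨0, by rw [if_neg h1, if_neg h2]; push_cast; ring⟩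
  | zero => exact ⟨0, by norm_num⟩
  | add x y _ _ hx hy =>
    obtain ⟨mx, hmx⟩ := hx
    obtain ⟨my, hmy⟩ := hy
    exact ⟨mx + my, by push_cast; show (x + y) i - (x + y) j = _; simp only [PiLp.add_apply]; linarith⟩
  | neg x _ hx =>
    obtain ⟨mx, hmx⟩ := hx
    exact ⟨-mx, by push_cast; show (-x) i - (-x) j = _; simp only [PiLp.neg_apply]; linarith⟩

lemma sum_smul_u_mem_sigma' (c : Fin n → ℝ) (hc : ∀ j, 0 ≤ c j) :
    (∑ j, c j • u n j) ∈ sigma' n := by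
  constructor
  · have h1 : ∀ i : Fin (n+1), (∑ j, c j • u n j) i = ∑ j, c j * u n j i := by
      intro i
      rw [WithLp.ofLp_sum, Finset.sum_apply i _ _]
      rfl
    rw [Finset.sum_congr rfl fun i _ => h1 i, Finset.sum_comm]
    apply Finset.sum_eq_zero
    intro j _
    rw [← Finset.mul_sum, sum_u_coords]
    ring
  · intro i
    rw [sum_smul_u_apply, sum_smul_u_apply]
    have hlast : ¬(((Fin.last n):ℕ) < n) := by simp
    rw [dif_neg hlast]
    by_cases h : (i:ℕ) < n
    · rw [dif_pos h]
      have := hc ⟨i, h⟩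
      linarith
    · rw [dif_neg h]

lemma coeff_nonneg_of_mem_sigma' (v : EuclideanSpace ℝ (Fin (n+1))) (hv : v ∈ sigma' n)
    (k : Fin n) : 0 ≤ v (Fin.last n) - v k.castSucc := by
  have := hv.2 k.castSucc
  linarith

lemma u_coeff_eq (c d : Fin n → ℝ) (h : ∑ j, c j • u n j = ∑ j, d j • u n j) : c = d := by
  funext j
  have hli := u_linearIndependent n
  rw [Fintype.linearIndependent_iff] at hli
  have hzero : ∑ i, (c i - d i) • u n i = 0 := by
    simp only [sub_smul, Finset.sum_sub_distrib, h, sub_self]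
  have := hli (fun i => c i - d i) hzero j
  linarith

lemma isFace_ray_u (hn : 1 ≤ n) (k : Fin n) :
    IsFace (sigmaCone n (-(fw n ⟨n - 1, Nat.sub_lt hn Nat.one_pos⟩))) (rayOf (u n k)) := by
  refine ⟨?_, ?_, ?_⟩
  · rintro x ⟨c, hc, rfl⟩
    apply subset_sigmaCone n hn
    have : c • u n k = ∑ j, (if j = k then c else 0) • u n j := by
      have hsummand : ∀ j : Fin n, (if j = k then c else 0) • u n j
          = (if j = k then c • u n j else 0) := fun j => by split <;> simp
      rw [Finset.sum_congr rfl fun j _ => hsummand j, Finset.sum_ite_eq' Finset.univ k]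
      simp
    rw [this]
    exact sum_smul_u_mem_sigma' n _ (fun j => by split <;> simp [hc])
  · rintro x ⟨a, ha, rfl⟩ y ⟨b, hb, rfl⟩ t s ht hs hts
    exact ⟨t * a + s * b, by positivity, by
      rw [smul_smul, smul_smul, ← add_smul]⟩
  · intro x hx y hy hxy
    obtain ⟨c, hc, hcu⟩ := hxy
    have hx' := sigmaCone_subset n hn hx
    have hy' := sigmaCone_subset n hn hy
    set cx : Fin n → ℝ := fun j => x (Fin.last n) - x j.castSucc with hcx
    set cy : Fin n → ℝ := fun j => y (Fin.last n) - y j.castSucc with hcy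
    have hxd : x = ∑ j, cx j • u n j := decomp n x hx'.1
    have hyd : y = ∑ j, cy j • u n j := decomp n y hy'.1
    have hsum : ∑ j, (cx j + cy j) • u n j = ∑ j, (if j = k then c else 0) • u n j := by
      have hsummand : ∀ j : Fin n, (if j = k then c else 0) • u n j
          = (if j = k then c • u n j else 0) := fun j => by split <;> simp
      rw [Finset.sum_congr rfl fun j _ => hsummand j, Finset.sum_ite_eq' Finset.univ k]
      simp only [Finset.mem_univ, if_true]
      rw [show ∑ j, (cx j + cy j) • u n j = (∑ j, cx j • u n j) + ∑ j, cy j • u n j by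
        rw [← Finset.sum_add_distrib]
        exact Finset.sum_congr rfl fun j _ => add_smul _ _ _]
      rw [← hxd, ← hyd, hcu]
    have hcoef := u_coeff_eq n _ _ hsum
    have hzero : ∀ j, j ≠ k → cx j = 0 ∧ cy j = 0 := by
      intro j hj
      have := congrFun hcoef j
      simp only [if_neg hj] at this
      have h1 : 0 ≤ cx j := coeff_nonneg_of_mem_sigma' n x hx' j
      have h2 : 0 ≤ cy j := coeff_nonneg_of_mem_sigma' n y hy' j
      exact ⟨by linarith, by linarith⟩
    constructor
    · refine ⟨cx k, coeff_nonneg_of_mem_sigma' n x hx' k, ?_⟩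
      rw [hxd]
      rw [Finset.sum_eq_single k]
      · intro j _ hj
        rw [(hzero j hj).1, zero_smul]
      · intro h; exact absurd (Finset.mem_univ k) h
    · refine ⟨cy k, coeff_nonneg_of_mem_sigma' n y hy' k, ?_⟩
      rw [hyd]
      rw [Finset.sum_eq_single k]
      · intro j _ hj
        rw [(hzero j hj).2, zero_smul]
      · intro h; exact absurd (Finset.mem_univ k) h

lemma u_ne_zero (k : Fin n) : u n k ≠ 0 := by
  intro h
  have h1 : u n k (Fin.last n) = 0 := by rw [h]; rfl
  rw [u_apply, if_neg (Fin.castSucc_lt_last k).ne', zero_add] at h1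
  have h2 : ((n:ℝ)+1)⁻¹ ≠ 0 := by positivity
  exact h2 h1

lemma prim_eq (hn : 1 ≤ n) :
    Prim (weightLattice n) (sigmaCone n (-(fw n ⟨n - 1, Nat.sub_lt hn Nat.one_pos⟩))) = Set.range (u n) := by
  apply Set.eq_of_subset_of_subset
  · rintro v ⟨hvL, hv0, hface, hprim⟩
    have hvσ : v ∈ sigmaCone n (-(fw n ⟨n - 1, Nat.sub_lt hn Nat.one_pos⟩)) :=
      hface.1 ⟨1, zero_le_one, (one_smul ℝ v).symm⟩
    have hv' := sigmaCone_subset n hn hvσ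
    set cv : Fin n → ℝ := fun j => v (Fin.last n) - v j.castSucc with hcv
    have hvd : v = ∑ j, cv j • u n j := decomp n v hv'.1
    have hnn : ∀ j, 0 ≤ cv j := fun j => coeff_nonneg_of_mem_sigma' n v hv' j
    have hex : ∃ a, cv a ≠ 0 := by
      by_contra hall
      push_neg at hall
      apply hv0
      rw [hvd]
      apply Finset.sum_eq_zero
      intro j _; rw [hall j, zero_smul]
    obtain ⟨a, ha⟩ := hex
    have hapos : 0 < cv a := lt_of_le_of_ne (hnn a) (Ne.symm ha)
    have hzero : ∀ b, b ≠ a → cv b = 0 := by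
      intro b hb
      by_contra hcb
      set x : EuclideanSpace ℝ (Fin (n+1)) := ∑ j, (if j = a then cv j else 0) • u n j with hx
      set y : EuclideanSpace ℝ (Fin (n+1)) := ∑ j, (if j = a then 0 else cv j) • u n j with hy
      have hxy : x + y = v := by
        rw [hvd, hx, hy, ← Finset.sum_add_distrib]
        apply Finset.sum_congr rfl
        intro j _
        rw [← add_smul]
        congr 1
        split <;> ring
      have hxσ : x ∈ sigmaCone n (-(fw n ⟨n - 1, Nat.sub_lt hn Nat.one_pos⟩)) :=
        subset_sigmaCone n hn (sum_smul_u_mem_sigma' n _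
          (fun j => by split; exacts [hnn j, le_refl 0]))
      have hyσ : y ∈ sigmaCone n (-(fw n ⟨n - 1, Nat.sub_lt hn Nat.one_pos⟩)) :=
        subset_sigmaCone n hn (sum_smul_u_mem_sigma' n _
          (fun j => by split; exacts [le_refl 0, hnn j]))
      have hmem : x + y ∈ rayOf v := by
        rw [hxy]; exact ⟨1, zero_le_one, (one_smul ℝ v).symm⟩
      obtain ⟨hxr, -⟩ := hface.2.2 x hxσ y hyσ hmem
      obtain ⟨t, ht, hxt⟩ := hxr
      have heq : ∑ j, (if j = a then cv j else 0) • u n j = ∑ j, (t * cv j) • u n j := by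
        rw [← hx, hxt, hvd, Finset.smul_sum]
        apply Finset.sum_congr rfl
        intro j _; rw [smul_smul]
      have hco := congrFun (u_coeff_eq n _ _ heq)
      have h1 := hco a
      have h2 := hco b
      simp only [if_pos rfl] at h1
      simp only [if_neg hb] at h2
      have h1' : cv a = t * cv a := by simpa using h1
      have ht1 : t = 1 := mul_right_cancel₀ ha (show t * cv a = 1 * cv a by rw [one_mul, ← h1'])
      rw [ht1] at h2
      exact hcb (by linarith)
    have hva : v = cv a • u n a := by
      rw [hvd, Finset.sum_eq_single a]
      · intro j _ hj; rw [hzero j hj, zero_smul]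
      · intro h; exact absurd (Finset.mem_univ a) h
    have hua_ray : u n a ∈ rayOf v :=
      ⟨(cv a)⁻¹, inv_nonneg.mpr (le_of_lt hapos), by
        rw [hva, smul_smul, inv_mul_cancel₀ hapos.ne', one_smul]⟩
    obtain ⟨m, hm⟩ := hprim (u n a) (u_mem_lattice n a) hua_ray
    rw [hva, ← Nat.cast_smul_eq_nsmul ℝ, smul_smul] at hm
    have hmc : (m:ℝ) * cv a = 1 := by
      by_contra hne
      have hz : ((m:ℝ) * cv a - 1) • u n a = 0 := by
        rw [sub_smul, one_smul, ← hm]; simp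
      rcases smul_eq_zero.mp hz with h | h
      · exact hne (by linarith)
      · exact u_ne_zero n a h
    obtain ⟨z, hz⟩ := lattice_diff n v hvL (Fin.last n) a.castSucc
    have hza : cv a = (z:ℝ) := hz
    have hzpos : 0 < z := by
      have : (0:ℝ) < (z:ℝ) := hza ▸ hapos
      exact_mod_cast this
    have hz1 : (1:ℝ) ≤ (z:ℝ) := by exact_mod_cast hzpos
    have hm0 : m ≠ 0 := by
      rintro rfl
      simp at hmc
    have hm1 : (1:ℝ) ≤ (m:ℝ) := by exact_mod_cast Nat.one_le_iff_ne_zero.mpr hm0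
    have hca1 : cv a = 1 := by nlinarith
    exact ⟨a, by rw [hva, hca1, one_smul]⟩
  · rintro v ⟨k, rfl⟩
    refine ⟨u_mem_lattice n k, u_ne_zero n k, isFace_ray_u n hn k, ?_⟩
    rintro w hwL ⟨c, hc, rfl⟩
    obtain ⟨z, hz⟩ := lattice_diff n (c • u n k) hwL (Fin.last n) k.castSucc
    have hcz : c = (z:ℝ) := by
      have h1 : (c • u n k) (Fin.last n) - (c • u n k) k.castSucc = c := by
        simp only [PiLp.smul_apply, smul_eq_mul, u_apply,
          if_neg (Fin.castSucc_lt_last k).ne']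
        norm_num
        ring
      rw [h1] at hz; exact hz
    have hz0 : 0 ≤ z := by
      have : (0:ℝ) ≤ (z:ℝ) := hcz ▸ hc
      exact_mod_cast this
    refine ⟨z.toNat, ?_⟩
    rw [← Nat.cast_smul_eq_nsmul ℝ]
    congr 1
    rw [hcz]
    exact_mod_cast (congrArg (fun w : ℤ => ((w:ℝ))) (Int.toNat_of_nonneg hz0)).symm

lemma range_u_eq (hn : 1 ≤ n) :
    Set.range (u n) = {v | ∃ k : Fin (n + 1), (k : ℕ) < n ∧
      v = -(e n k) + (((n : ℝ) + 1)⁻¹) • allOnes n} := by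
  apply Set.eq_of_subset_of_subset
  · rintro v ⟨j, rfl⟩
    exact ⟨j.castSucc, by simpa using j.isLt, rfl⟩
  · rintro v ⟨k, hk, rfl⟩
    refine ⟨⟨(k:ℕ), hk⟩, ?_⟩
    have : Fin.castSucc (⟨(k:ℕ), hk⟩ : Fin n) = k := Fin.ext rfl
    rw [u, this]

lemma neg_fw_zero (h0 : 0 < n) : -(fw n ⟨0, h0⟩) = u n ⟨0, h0⟩ := by
  rw [u_zero_eq n h0]

lemma orbit_eq (hn : 1 ≤ n) :
    Set.range (u n) = {v | ∃ w, (w ∈ Weyl n ∧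
        w (-(fw n ⟨n - 1, Nat.sub_lt hn Nat.one_pos⟩)) = -(fw n ⟨n - 1, Nat.sub_lt hn Nat.one_pos⟩)) ∧
      v = w (-(fw n ⟨0, hn⟩))} := by
  have h0 : 0 < n := hn
  have hA : Fin.castSucc (⟨0, h0⟩ : Fin n) ≠ Fin.last n := (Fin.castSucc_lt_last _).ne
  apply Set.eq_of_subset_of_subset
  · rintro v ⟨k, rfl⟩
    have hB : k.castSucc ≠ Fin.last n := (Fin.castSucc_lt_last _).ne
    set π : Equiv.Perm (Fin (n+1)) :=
      Equiv.swap (Fin.castSucc (⟨0, h0⟩ : Fin n)) k.castSucc with hπ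
    have hπlast : π (Fin.last n) = Fin.last n :=
      Equiv.swap_apply_of_ne_of_ne (Ne.symm hA) (Ne.symm hB)
    refine ⟨permLE n π, ⟨permLE_mem_weyl n π, permLE_fixes_lam n hn π hπlast⟩, ?_⟩
    rw [show -(fw n ⟨0, hn⟩) = u n ⟨0, h0⟩ from neg_fw_zero n h0]
    ext i
    rw [permLE_apply, u_apply, u_apply]
    congr 1
    have hiff : π⁻¹ i = Fin.castSucc (⟨0, h0⟩ : Fin n) ↔ i = k.castSucc := by
      rw [Equiv.Perm.inv_eq_iff_eq]
      constructor
      · intro h; rw [h, hπ, Equiv.swap_apply_left]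
      · intro h; rw [h, hπ, Equiv.swap_apply_left]
    by_cases hi : i = k.castSucc
    · rw [if_pos hi, if_pos (hiff.mpr hi)]
    · rw [if_neg hi, if_neg (fun hh => hi (hiff.mp hh))]
  · rintro v ⟨w, ⟨hwW, hwl⟩, rfl⟩
    obtain ⟨π, hπ, hπl⟩ := stab_perm n hn w hwW hwl
    set j : Fin (n+1) := π⁻¹ (Fin.castSucc (⟨0, h0⟩ : Fin n)) with hj
    have hjne : j ≠ Fin.last n := by
      intro h
      apply hA
      rw [← Equiv.Perm.apply_inv_self π (Fin.castSucc (⟨0, h0⟩ : Fin n)), ← hj, h, hπl]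
    have hjlt : (j:ℕ) < n := by
      have h1 := j.isLt
      have h2 : (j:ℕ) ≠ n := fun h => hjne (Fin.ext (by simp [h]))
      omega
    refine ⟨⟨(j:ℕ), hjlt⟩, ?_⟩
    rw [show -(fw n ⟨0, hn⟩) = u n ⟨0, h0⟩ from neg_fw_zero n h0]
    ext i
    rw [hπ (u n ⟨0, h0⟩) i, u_apply, u_apply]
    congr 1
    have hcs : Fin.castSucc (⟨(j:ℕ), hjlt⟩ : Fin n) = j := Fin.ext rfl
    rw [hcs]
    have hiff : π i = Fin.castSucc (⟨0, h0⟩ : Fin n) ↔ i = j := by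
      rw [hj]
      constructor
      · intro h; rw [← h, Equiv.Perm.inv_apply_self]
      · intro h; rw [h, Equiv.Perm.apply_inv_self]
    by_cases hi : i = j
    · rw [if_pos hi, if_pos (hiff.mpr hi)]
    · rw [if_neg hi, if_neg (fun hh => hi (hiff.mp hh))]

lemma root_eq_u_sub (i : Fin n) (h : (i:ℕ)+1 < n) :
    simpleRoot n i = u n ⟨(i:ℕ)+1, h⟩ - u n i := by
  have hcs : Fin.castSucc (⟨(i:ℕ)+1, h⟩ : Fin n) = i.succ := Fin.ext rfl
  simp only [simpleRoot, u, hcs]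
  abel

lemma e_sub_mem_span (hn : 1 ≤ n) :
    ∀ (m : ℕ) (hm : m < n),
      e n (⟨0, by omega⟩ : Fin (n+1)) - e n (⟨m, by omega⟩ : Fin (n+1)) ∈
        Submodule.span ℝ (simpleRoot n '' {i : Fin n | (i : ℕ) + 1 < n}) := by
  intro m
  induction m with
  | zero => intro hm; simp
  | succ m ih =>
    intro hm
    have h1 : e n (⟨0, by omega⟩ : Fin (n+1)) - e n (⟨m+1, by omega⟩ : Fin (n+1))
        = (e n (⟨0, by omega⟩ : Fin (n+1)) - e n (⟨m, by omega⟩ : Fin (n+1)))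
          + simpleRoot n ⟨m, by omega⟩ := by
      have hc : Fin.castSucc (⟨m, by omega⟩ : Fin n) = (⟨m, by omega⟩ : Fin (n+1)) :=
        Fin.ext rfl
      have hs : Fin.succ (⟨m, by omega⟩ : Fin n) = (⟨m+1, by omega⟩ : Fin (n+1)) :=
        Fin.ext rfl
      simp only [simpleRoot, hc, hs]
      abel
    rw [h1]
    refine Submodule.add_mem _ (ih (by omega)) ?_
    exact Submodule.subset_span ⟨⟨m, by omega⟩, by simpa using hm, rfl⟩

lemma u_sub_u0_mem_span (hn : 1 ≤ n) (k : Fin n) :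
    u n k - u n ⟨0, hn⟩ ∈
      Submodule.span ℝ (simpleRoot n '' {i : Fin n | (i : ℕ) + 1 < n}) := by
  have h1 : u n k - u n ⟨0, hn⟩
      = e n (⟨0, by omega⟩ : Fin (n+1)) - e n (⟨(k:ℕ), by omega⟩ : Fin (n+1)) := by
    have hc1 : Fin.castSucc (⟨0, hn⟩ : Fin n) = (⟨0, by omega⟩ : Fin (n+1)) := Fin.ext rfl
    have hc2 : Fin.castSucc k = (⟨(k:ℕ), by omega⟩ : Fin (n+1)) := Fin.ext rfl
    simp only [u, hc1, hc2]
    abel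
  rw [h1]
  exact e_sub_mem_span n hn (k:ℕ) k.isLt

lemma affine_eq (hn : 1 ≤ n) :
    (affineSpan ℝ (Set.range (u n)) : Set (EuclideanSpace ℝ (Fin (n + 1)))) =
      {x | ∃ y ∈ Submodule.span ℝ (simpleRoot n '' {i : Fin n | (i : ℕ) + 1 < n}),
        x = -(fw n ⟨0, hn⟩) + y} := by
  have h0 : 0 < n := hn
  set M := simpleRoot n '' {i : Fin n | (i : ℕ) + 1 < n} with hM
  set u0 : EuclideanSpace ℝ (Fin (n+1)) := u n ⟨0, h0⟩ with hu0
  have hfw0 : -(fw n ⟨0, hn⟩) = u0 := neg_fw_zero n h0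
  have hu0mem : u0 ∈ affineSpan ℝ (Set.range (u n)) :=
    subset_affineSpan ℝ _ ⟨⟨0, h0⟩, rfl⟩
  apply Set.eq_of_subset_of_subset
  · intro x hx
    have hle : affineSpan ℝ (Set.range (u n)) ≤
        AffineSubspace.mk' u0 (Submodule.span ℝ M) := by
      apply affineSpan_le.mpr
      rintro v ⟨k, rfl⟩
      rw [SetLike.mem_coe, AffineSubspace.mem_mk']
      exact u_sub_u0_mem_span n hn k
    have := hle hx
    rw [AffineSubspace.mem_mk'] at this
    refine ⟨x - u0, this, ?_⟩
    rw [hfw0]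
    abel
  · rintro x ⟨y, hy, rfl⟩
    rw [hfw0]
    have hdir : Submodule.span ℝ M ≤ (affineSpan ℝ (Set.range (u n))).direction := by
      rw [direction_affineSpan]
      apply Submodule.span_le.mpr
      rintro r ⟨i, hi, rfl⟩
      have hi' : (i:ℕ) + 1 < n := hi
      rw [root_eq_u_sub n i hi']
      exact vsub_mem_vectorSpan ℝ ⟨_, rfl⟩ ⟨_, rfl⟩
    have := AffineSubspace.vadd_mem_of_mem_direction (hdir hy) hu0mem
    have heq : y +ᵥ u0 = u0 + y := by
      show y + u0 = u0 + y
      abel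
    rw [heq] at this
    exact this

end AnType

/-- for `A_n` (`n ≥ 1`) and `λ = -ω_n`, the set `Prim(σ_λ)` equals
`W_λ·(-ω_1)`, consists of the `n` vectors `-ε_k + (1/(n+1)) Σ ε_i`, `k = 1,…,n`, is a
basis of the weight lattice `Λ_P`, and its affine span is `-ω_1 + ℝ⟨α_1,…,α_{n-1}⟩`. -/
theorem statement18 (n : ℕ) (hn : 1 ≤ n) :
    AnType.Prim (AnType.weightLattice n)
        (AnType.sigmaCone n (-(AnType.fw n ⟨n - 1, by omega⟩))) =
      {v | ∃ k : Fin (n + 1), (k : ℕ) < n ∧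
        v = -(AnType.e n k) + (((n : ℝ) + 1)⁻¹) • AnType.allOnes n} ∧
    AnType.Prim (AnType.weightLattice n)
        (AnType.sigmaCone n (-(AnType.fw n ⟨n - 1, by omega⟩))) =
      {v | ∃ w, (w ∈ AnType.Weyl n ∧
          w (-(AnType.fw n ⟨n - 1, by omega⟩)) = -(AnType.fw n ⟨n - 1, by omega⟩)) ∧
        v = w (-(AnType.fw n ⟨0, by omega⟩))} ∧
    LinearIndependent ℝ (fun k : Fin n =>
      -(AnType.e n k.castSucc) + (((n : ℝ) + 1)⁻¹) • AnType.allOnes n) ∧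
    AddSubgroup.closure (Set.range fun k : Fin n =>
        -(AnType.e n k.castSucc) + (((n : ℝ) + 1)⁻¹) • AnType.allOnes n) =
      AnType.weightLattice n ∧
    (affineSpan ℝ (AnType.Prim (AnType.weightLattice n)
        (AnType.sigmaCone n (-(AnType.fw n ⟨n - 1, by omega⟩)))) :
          Set (EuclideanSpace ℝ (Fin (n + 1)))) =
      {x | ∃ y ∈ Submodule.span ℝ (AnType.simpleRoot n '' {i : Fin n | (i : ℕ) + 1 < n}),
        x = -(AnType.fw n ⟨0, by omega⟩) + y} := by
  refine ⟨?_, ?_, ?_, ?_, ?_⟩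
  · rw [AnType.prim_eq n hn]
    exact AnType.range_u_eq n hn
  · rw [AnType.prim_eq n hn]
    exact AnType.orbit_eq n hn
  · exact AnType.u_linearIndependent n
  · exact AnType.closure_u_eq n
  · rw [AnType.prim_eq n hn]
    exact AnType.affine_eq n hn
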